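/- Let T be a closed subset of [0,1] containing 0 and 1. The restriction map J|_{H¹} : H¹ → H_T (restricting a Cameron–Martin path on [0,1] to T) is surjective onto H_T. -/

import Mathlib

open MeasureTheory Set
open scoped ENNReal Classical

noncomputable def rhoBar (T : Set ℝ) (t : ℝ) : ℝ :=
  if t = 0 then 0 else sSup {u | u ∈ T ∧ u < t}

noncomputable def sigmaBar (T : Set ℝ) (t : ℝ) : ℝ :=
  if t = 1 then 1 else sInf {u | u ∈ T ∧ t < u}

noncomputable def lamDelta (T : Set ℝ) : Measure ℝ :=
  Measure.map (rhoBar T) (volume.restrict (Icc 0 1))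

section aux

variable {T : Set ℝ}

lemma rhoBar_bddAbove (hTsub : T ⊆ Icc 0 1) (s : ℝ) :
    BddAbove {u | u ∈ T ∧ u < s} :=
  ⟨1, fun u hu => (hTsub hu.1).2⟩

lemma rhoBar_of_nonpos (hTsub : T ⊆ Icc 0 1) {s : ℝ} (hs : s ≤ 0) :
    rhoBar T s = 0 := by
  unfold rhoBar
  split_ifs with h
  · rfl
  · have : {u | u ∈ T ∧ u < s} = ∅ := by
      ext u; simp only [mem_setOf_eq, mem_empty_iff_false, iff_false, not_and]
      intro hu
      exact not_lt.2 (hs.trans (hTsub hu).1)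
    rw [this, Real.sSup_empty]

lemma rhoBar_nonneg (hTsub : T ⊆ Icc 0 1) (h0T : (0:ℝ) ∈ T) (s : ℝ) :
    0 ≤ rhoBar T s := by
  rcases le_or_gt s 0 with hs | hs
  · rw [rhoBar_of_nonpos hTsub hs]
  · unfold rhoBar
    rw [if_neg hs.ne']
    exact le_csSup (rhoBar_bddAbove hTsub s) ⟨h0T, hs⟩

lemma rhoBar_le_self (hTsub : T ⊆ Icc 0 1) {s : ℝ} (hs : 0 < s) :
    rhoBar T s ≤ s := by
  unfold rhoBar
  rw [if_neg hs.ne']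
  rcases Set.eq_empty_or_nonempty {u | u ∈ T ∧ u < s} with h | h
  · rw [h, Real.sSup_empty]; exact hs.le
  · exact csSup_le h fun u hu => hu.2.le

lemma rhoBar_mem (hT : IsClosed T) (hTsub : T ⊆ Icc 0 1) (h0T : (0:ℝ) ∈ T)
    (s : ℝ) : rhoBar T s ∈ T := by
  rcases le_or_gt s 0 with hs | hs
  · rw [rhoBar_of_nonpos hTsub hs]; exact h0T
  · unfold rhoBar
    rw [if_neg hs.ne']
    have hne : {u | u ∈ T ∧ u < s}.Nonempty := ⟨0, h0T, hs⟩
    have := csSup_mem_closure hne (rhoBar_bddAbove hTsub s)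
    have hsub : closure {u | u ∈ T ∧ u < s} ⊆ T := by
      refine hT.closure_subset_iff.2 ?_
      exact fun u hu => hu.1
    exact hsub this

lemma rhoBar_ge (h0T : (0:ℝ) ∈ T) {t s : ℝ} (htT : t ∈ T) (hts : t < s)
    (hTsub : T ⊆ Icc 0 1) : t ≤ rhoBar T s := by
  have hs : (0:ℝ) < s := lt_of_le_of_lt (hTsub htT).1 hts
  unfold rhoBar
  rw [if_neg hs.ne']
  exact le_csSup (rhoBar_bddAbove hTsub s) ⟨htT, hts⟩

lemma rhoBar_mono (hTsub : T ⊆ Icc 0 1) (h0T : (0:ℝ) ∈ T) :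
    Monotone (rhoBar T) := by
  intro a b hab
  rcases le_or_gt a 0 with ha | ha
  · rw [rhoBar_of_nonpos hTsub ha]
    exact rhoBar_nonneg hTsub h0T b
  · have hb : 0 < b := ha.trans_le hab
    unfold rhoBar
    rw [if_neg ha.ne', if_neg hb.ne']
    refine csSup_le_csSup (rhoBar_bddAbove hTsub b) ⟨0, h0T, ha⟩ ?_
    exact fun u hu => ⟨hu.1, hu.2.trans_le hab⟩

lemma rhoBar_measurable (hTsub : T ⊆ Icc 0 1) (h0T : (0:ℝ) ∈ T) :
    Measurable (rhoBar T) :=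
  (rhoBar_mono hTsub h0T).measurable

end aux

theorem stmt_11 (T : Set ℝ) (hT : IsClosed T) (hTsub : T ⊆ Icc 0 1)
    (h0T : (0:ℝ) ∈ T) (h1T : (1:ℝ) ∈ T) :
    ∀ hΔ : ℝ → ℝ, MemLp hΔ 2 (lamDelta T) →
      ∃ g : ℝ → ℝ, MemLp g 2 (volume.restrict (Icc 0 1)) ∧
        ∀ t ∈ T, (∫ s in Ico (0:ℝ) t, g s)
          = ∫ s in Ico (0:ℝ) t ∩ T, hΔ s ∂(lamDelta T) := by
  intro hΔ hmem
  set μ : Measure ℝ := volume.restrict (Icc 0 1) with hμ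
  have hρmeas : Measurable (rhoBar T) := rhoBar_measurable hTsub h0T
  have hρae : AEMeasurable (rhoBar T) μ := hρmeas.aemeasurable
  have hΔsm : AEStronglyMeasurable hΔ (Measure.map (rhoBar T) μ) := hmem.1
  refine ⟨hΔ ∘ rhoBar T, ?_, ?_⟩
  · exact (memLp_map_measure_iff hΔsm hρae).1 hmem
  · intro t htT
    have ht01 : t ∈ Icc (0:ℝ) 1 := hTsub htT
    have hAmeas : MeasurableSet (Ico (0:ℝ) t ∩ T) :=
      measurableSet_Ico.inter hT.measurableSet
    -- rewrite RHS as integral over preimage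
    rw [lamDelta, setIntegral_map hAmeas hΔsm hρae]
    -- preimage is a.e. (μ) equal to Ico 0 t
    have hae : (rhoBar T ⁻¹' (Ico 0 t ∩ T)) =ᵐ[μ] Ico (0:ℝ) t := by
      have h1 : ∀ᵐ s ∂μ, s ∈ Icc (0:ℝ) 1 := ae_restrict_mem measurableSet_Icc
      have h2 : ∀ᵐ s ∂μ, s ≠ t := by
        refine ae_restrict_of_ae ?_
        have : (volume : Measure ℝ) {t} = 0 := measure_singleton t
        filter_upwards [measure_eq_zero_iff_ae_notMem.1 this] with s hs
        simpa using hs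
      filter_upwards [h1, h2] with s hs hst
      simp only [mem_preimage, mem_inter_iff, mem_Ico, eq_iff_iff]
      constructor
      · rintro ⟨⟨_, hlt⟩, _⟩
        refine ⟨hs.1, ?_⟩
        rcases lt_trichotomy s t with h | h | h
        · exact h
        · exact absurd h hst
        · exact absurd (rhoBar_ge h0T htT h hTsub) (not_le.2 hlt)
      · rintro ⟨hs0, hst'⟩
        refine ⟨⟨rhoBar_nonneg hTsub h0T s, ?_⟩, rhoBar_mem hT hTsub h0T s⟩
        rcases eq_or_lt_of_le hs0 with h | h
        · rw [rhoBar_of_nonpos hTsub h.symm.le]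
          exact lt_of_le_of_lt hs0 hst'
        · exact lt_of_le_of_lt (rhoBar_le_self hTsub h) hst'
    rw [Measure.restrict_congr_set hae]
    -- now both sides are integrals over Ico 0 t
    have : μ.restrict (Ico 0 t) = volume.restrict (Ico (0:ℝ) t) := by
      rw [hμ, Measure.restrict_restrict measurableSet_Ico,
        inter_eq_left.2 (show Ico (0:ℝ) t ⊆ Icc 0 1 from fun s hs => ⟨hs.1, hs.2.le.trans ht01.2⟩)]
    rw [this]
    rfl
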